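/- arXiv:1804.00199 — 3 statements merged into one kernel-verified Lean document; each statement's English description precedes it below -/
import Mathlib

section
/- Let p and q be distinct odd primes. The set L = {(k mod p, k mod q) : 0 < k < pq/2, p ∤ k, q ∤ k} is a set of coset representatives for the subgroup Γ = {(1,1), (−1,−1)} in G = (ℤ/pℤ)ˣ × (ℤ/qℤ)ˣ: every coset of Γ contains exactly one element of L. -/
/-- `L = {(k mod p, k mod q) : 0 < k < pq/2, p ∤ k, q ∤ k}` is a set of
coset representatives for `Γ = {(1,1), (-1,-1)}` in `(ℤ/p)ˣ × (ℤ/q)ˣ`: every coset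
`{g, -g}` contains exactly one element of `L`. -/
theorem stmt_15 (p q : ℕ) [Fact p.Prime] [Fact q.Prime] (hpq : p ≠ q)
    (hp2 : p ≠ 2) (hq2 : q ≠ 2) :
    ∀ g : (ZMod p)ˣ × (ZMod q)ˣ, ∃! k : ℕ,
      0 < k ∧ 2 * k < p * q ∧ ¬ p ∣ k ∧ ¬ q ∣ k ∧
        ((((k : ZMod p), (k : ZMod q)) = (((g.1 : ZMod p)), ((g.2 : ZMod q)))) ∨
         (((k : ZMod p), (k : ZMod q)) = ((-(g.1 : ZMod p)), (-(g.2 : ZMod q))))) := by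
  intro g
  have hp : p.Prime := Fact.out
  have hq : q.Prime := Fact.out
  have hcop : Nat.Coprime p q := (Nat.coprime_primes hp hq).mpr hpq
  have hpodd : Odd p := hp.odd_of_ne_two hp2
  have hqodd : Odd q := hq.odd_of_ne_two hq2
  have hpqodd : Odd (p * q) := hpodd.mul hqodd
  have hppos : 0 < p := hp.pos
  have hqpos : 0 < q := hq.pos
  have hpqpos : 0 < p * q := Nat.mul_pos hppos hqpos
  set x : ZMod p := (g.1 : ZMod p) with hxdef
  set y : ZMod q := (g.2 : ZMod q) with hydef
  have hx0 : x ≠ 0 := g.1.ne_zero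
  have hy0 : y ≠ 0 := g.2.ne_zero
  -- key fact used for uniqueness
  have key : ∀ k1 k2 : ℕ, (0 < k1 ∧ 2 * k1 < p * q ∧ ¬ p ∣ k1 ∧ ¬ q ∣ k1 ∧
        ((((k1 : ZMod p), (k1 : ZMod q)) = (x, y)) ∨
         (((k1 : ZMod p), (k1 : ZMod q)) = (-x, -y)))) →
      (0 < k2 ∧ 2 * k2 < p * q ∧ ¬ p ∣ k2 ∧ ¬ q ∣ k2 ∧
        ((((k2 : ZMod p), (k2 : ZMod q)) = (x, y)) ∨
         (((k2 : ZMod p), (k2 : ZMod q)) = (-x, -y)))) → k1 = k2 := by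
    intro k1 k2 ⟨h1pos, h1lt, _, _, h1⟩ ⟨h2pos, h2lt, _, _, h2⟩
    have same : ((k1 : ZMod p) = (k2 : ZMod p)) → ((k1 : ZMod q) = (k2 : ZMod q)) → k1 = k2 := by
      intro hep heq
      have m1 : k1 ≡ k2 [MOD p] := (ZMod.natCast_eq_natCast_iff _ _ _).mp hep
      have m2 : k1 ≡ k2 [MOD q] := (ZMod.natCast_eq_natCast_iff _ _ _).mp heq
      have m : k1 ≡ k2 [MOD p * q] :=
        (Nat.modEq_and_modEq_iff_modEq_mul hcop).mp ⟨m1, m2⟩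
      have lt1 : k1 < p * q := lt_of_le_of_lt (Nat.le_mul_of_pos_left k1 (by norm_num)) h1lt
      have lt2 : k2 < p * q := lt_of_le_of_lt (Nat.le_mul_of_pos_left k2 (by norm_num)) h2lt
      have := m
      unfold Nat.ModEq at this
      rwa [Nat.mod_eq_of_lt lt1, Nat.mod_eq_of_lt lt2] at this
    have opp : ((k1 : ZMod p) = -(k2 : ZMod p)) → ((k1 : ZMod q) = -(k2 : ZMod q)) → k1 = k2 := by
      intro hep heq
      have hpd : p ∣ k1 + k2 := by
        have : ((k1 + k2 : ℕ) : ZMod p) = 0 := by push_cast; rw [hep]; ring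
        exact (ZMod.natCast_eq_zero_iff _ _).mp this
      have hqd : q ∣ k1 + k2 := by
        have : ((k1 + k2 : ℕ) : ZMod q) = 0 := by push_cast; rw [heq]; ring
        exact (ZMod.natCast_eq_zero_iff _ _).mp this
      have hpq : p * q ∣ k1 + k2 := hcop.mul_dvd_of_dvd_of_dvd hpd hqd
      have hlt : k1 + k2 < p * q := by omega
      have := Nat.le_of_dvd (by omega) hpq
      omega
    rcases h1 with h1 | h1 <;> rcases h2 with h2 | h2 <;>
      simp only [Prod.mk.injEq] at h1 h2
    · exact same (h1.1.trans h2.1.symm) (h1.2.trans h2.2.symm)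
    · exact opp (by rw [h1.1, h2.1]; try ring) (by rw [h1.2, h2.2]; try ring)
    · exact opp (by rw [h1.1, h2.1]; try ring) (by rw [h1.2, h2.2]; try ring)
    · exact same (h1.1.trans h2.1.symm) (h1.2.trans h2.2.symm)
  -- existence
  obtain ⟨k0, hk0p, hk0q⟩ := Nat.chineseRemainder hcop x.val y.val
  -- reduce k0 mod p*q
  set n := k0 % (p * q) with hndef
  have hnlt : n < p * q := Nat.mod_lt _ hpqpos
  have hnp : (n : ZMod p) = x := by
    have h1 : (n : ZMod p) = (k0 : ZMod p) := by
      have : n ≡ k0 [MOD p] := (Nat.mod_modEq k0 (p * q)).of_mul_right q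
      exact (ZMod.natCast_eq_natCast_iff _ _ _).mpr this
    have h2 : (k0 : ZMod p) = (x.val : ZMod p) := (ZMod.natCast_eq_natCast_iff _ _ _).mpr hk0p
    rw [h1, h2, ZMod.natCast_val, ZMod.cast_id]
  have hnq : (n : ZMod q) = y := by
    have h1 : (n : ZMod q) = (k0 : ZMod q) := by
      have : n ≡ k0 [MOD q] := (Nat.mod_modEq k0 (p * q)).of_mul_left p
      exact (ZMod.natCast_eq_natCast_iff _ _ _).mpr this
    have h2 : (k0 : ZMod q) = (y.val : ZMod q) := (ZMod.natCast_eq_natCast_iff _ _ _).mpr hk0q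
    rw [h1, h2, ZMod.natCast_val, ZMod.cast_id]
  have hnpos : 0 < n := by
    rcases Nat.eq_zero_or_pos n with h | h
    · exfalso; apply hx0; rw [← hnp, h]; simp
    · exact h
  have hpn : ¬ p ∣ n := by
    intro h
    apply hx0
    rw [← hnp, (ZMod.natCast_eq_zero_iff _ _).mpr h]
  have hqn : ¬ q ∣ n := by
    intro h
    apply hy0
    rw [← hnq, (ZMod.natCast_eq_zero_iff _ _).mpr h]
  have hne : 2 * n ≠ p * q := by
    intro h
    exact Nat.not_odd_iff_even.mpr ⟨n, by omega⟩ hpqodd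
  rcases lt_or_gt_of_ne hne with hlt | hgt
  · exact ⟨n, ⟨hnpos, hlt, hpn, hqn, Or.inl (by rw [hnp, hnq])⟩,
      fun k2 h2 => key k2 n h2 ⟨hnpos, hlt, hpn, hqn, Or.inl (by rw [hnp, hnq])⟩⟩
  · refine ⟨p * q - n, ?_, ?_⟩
    · have hcastp : ((p * q - n : ℕ) : ZMod p) = -x := by
        have : ((p * q - n : ℕ) : ZMod p) = ((p * q : ℕ) : ZMod p) - n := by
          rw [Nat.cast_sub hnlt.le]
        rw [this, hnp]
        have : ((p * q : ℕ) : ZMod p) = 0 :=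
          (ZMod.natCast_eq_zero_iff _ _).mpr ⟨q, rfl⟩
        rw [this]; ring
      have hcastq : ((p * q - n : ℕ) : ZMod q) = -y := by
        have h' : ((p * q - n : ℕ) : ZMod q) = ((p * q : ℕ) : ZMod q) - n := by
          rw [Nat.cast_sub hnlt.le]
        rw [h', hnq]
        have : ((p * q : ℕ) : ZMod q) = 0 :=
          (ZMod.natCast_eq_zero_iff _ _).mpr ⟨p, Nat.mul_comm p q⟩
        rw [this]; ring
      refine ⟨by omega, by omega, ?_, ?_, Or.inr (by rw [hcastp, hcastq])⟩
      · intro h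
        apply hx0
        have := (ZMod.natCast_eq_zero_iff _ _).mpr h
        rw [hcastp] at this
        simpa using this
      · intro h
        apply hy0
        have := (ZMod.natCast_eq_zero_iff _ _).mpr h
        rw [hcastq] at this
        simpa using this
    · intro k2 h2
      apply key k2 (p * q - n) h2
      have hcastp : ((p * q - n : ℕ) : ZMod p) = -x := by
        rw [Nat.cast_sub hnlt.le, hnp,
          (ZMod.natCast_eq_zero_iff _ _).mpr (⟨q, rfl⟩ : p ∣ p * q)]
        ring
      have hcastq : ((p * q - n : ℕ) : ZMod q) = -y := by
        rw [Nat.cast_sub hnlt.le, hnq,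
          (ZMod.natCast_eq_zero_iff _ _).mpr (⟨p, Nat.mul_comm p q⟩ : q ∣ p * q)]
        ring
      refine ⟨by omega, by omega, ?_, ?_, Or.inr (by rw [hcastp, hcastq])⟩
      · intro h
        apply hx0
        have := (ZMod.natCast_eq_zero_iff _ _).mpr h
        rw [hcastp] at this; simpa using this
      · intro h
        apply hy0
        have := (ZMod.natCast_eq_zero_iff _ _).mpr h
        rw [hcastq] at this; simpa using this
end

section
/- Let p and q be distinct odd primes. Then the product in (ℤ/pℤ)ˣ of k mod p, taken over all integers k with 0 < k < pq/2, p ∤ k, and q ∤ k, equals (−1)^((q−1)/2) · (q/p), where (q/p) is the Legendre symbol of q modulo p (viewed as ±1 in (ℤ/pℤ)ˣ). -/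
open Finset

/-- Product over a block of `r < p` consecutive integers starting just after a multiple
of `p`: none are divisible by `p`, and the product mod `p` is `r!`. -/
lemma stmt16_aux1 (p : ℕ) [hp : Fact p.Prime] (m r : ℕ) (hr : r < p) :
    ∏ k ∈ Finset.Ico (m * p + 1) (m * p + (r + 1)),
      (if ¬ p ∣ k then (k : ZMod p) else 1) = ((Nat.factorial r : ℕ) : ZMod p) := by
  have hmap : Finset.Ico (m * p + 1) (m * p + (r + 1))
      = Finset.map (addLeftEmbedding (m * p)) (Finset.Ico 1 (r + 1)) := by
    rw [Finset.map_add_left_Ico]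
  rw [hmap, Finset.prod_map]
  have h1 : ∀ b ∈ Finset.Ico 1 (r + 1),
      (if ¬ p ∣ (addLeftEmbedding (m * p) b) then ((addLeftEmbedding (m * p) b : ℕ) : ZMod p)
        else 1) = (b : ZMod p) := by
    intro b hb
    simp only [Finset.mem_Ico] at hb
    have hbd : ¬ p ∣ (m * p + b) := by
      rw [Nat.dvd_add_right (dvd_mul_left p m)]
      intro h
      have := Nat.le_of_dvd (by omega) h
      omega
    simp only [addLeftEmbedding_apply, hbd, not_false_iff, if_true]
    push_cast
    simp [ZMod.natCast_self]
  rw [Finset.prod_congr rfl h1, ← Nat.cast_prod, Finset.prod_Ico_id_eq_factorial]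

/-- Product of `k mod p` over `0 < k ≤ m * p` with `p ∤ k` equals `(-1)^m`. -/
lemma stmt16_aux2 (p : ℕ) [hp : Fact p.Prime] (m : ℕ) :
    ∏ k ∈ Finset.Ico 1 (m * p + 1), (if ¬ p ∣ k then (k : ZMod p) else 1) = (-1) ^ m := by
  induction m with
  | zero => simp
  | succ n ih =>
    have hple : 2 ≤ p := hp.out.two_le
    have h1 : (1 : ℕ) ≤ n * p + 1 := by omega
    have h2 : n * p + 1 ≤ (n + 1) * p + 1 := by nlinarith
    rw [← Finset.prod_Ico_consecutive _ h1 h2, ih]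
    have h3 : (n + 1) * p + 1 = (n * p + p) + 1 := by ring
    rw [h3]
    have h4 : n * p + 1 ≤ n * p + p := by omega
    rw [Finset.prod_Ico_succ_top h4]
    have h5 : p ∣ n * p + p := ⟨n + 1, by ring⟩
    simp only [h5, not_true_eq_false, if_false, mul_one]
    have h6 : n * p + p = n * p + ((p - 1) + 1) := by omega
    rw [h6, stmt16_aux1 p n (p - 1) (by omega), ZMod.wilsons_lemma p]
    ring

/-- for distinct odd primes `p, q`, the product of `k mod p` over all
`0 < k < pq/2` with `p ∤ k` and `q ∤ k` equals `(-1)^((q-1)/2) · (q/p)`. -/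
theorem stmt_16 (p q : ℕ) [Fact p.Prime] [Fact q.Prime] (hpq : p ≠ q)
    (hp2 : p ≠ 2) (hq2 : q ≠ 2) :
    ∏ k ∈ (Finset.range (p * q)).filter
        (fun k => 0 < k ∧ 2 * k < p * q ∧ ¬ p ∣ k ∧ ¬ q ∣ k), (k : ZMod p) =
      (-1) ^ ((q - 1) / 2) * ((legendreSym p q : ℤ) : ZMod p) := by
  have hp : p.Prime := Fact.out
  have hq : q.Prime := Fact.out
  have hpodd : p % 2 = 1 := Nat.odd_iff.mp (hp.odd_of_ne_two hp2)
  have hqodd : q % 2 = 1 := Nat.odd_iff.mp (hq.odd_of_ne_two hq2)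
  have hp3 : 3 ≤ p := by have := hp.two_le; omega
  have hq3 : 3 ≤ q := by have := hq.two_le; omega
  set a := p / 2 with ha
  set b := q / 2 with hb
  have hpa : p = 2 * a + 1 := by omega
  have hqb : q = 2 * b + 1 := by omega
  have ha1 : 1 ≤ a := by omega
  have hb1 : 1 ≤ b := by omega
  have hN : p * q = 2 * (b * p + a) + 1 := by rw [hpa, hqb]; ring
  -- rewrite the index set
  have hset : (Finset.range (p * q)).filter
      (fun k => 0 < k ∧ 2 * k < p * q ∧ ¬ p ∣ k ∧ ¬ q ∣ k)
      = ((Finset.Ico 1 (b * p + a + 1)).filter (fun k => ¬ p ∣ k)).filter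
          (fun k => ¬ q ∣ k) := by
    ext k
    simp only [Finset.mem_filter, Finset.mem_range, Finset.mem_Ico]
    constructor
    · rintro ⟨hk, h0, h2k, hpk, hqk⟩
      exact ⟨⟨⟨by omega, by omega⟩, hpk⟩, hqk⟩
    · rintro ⟨⟨⟨h1, h2⟩, hpk⟩, hqk⟩
      exact ⟨by omega, by omega, by omega, hpk, hqk⟩
  rw [hset]
  set T := (Finset.Ico 1 (b * p + a + 1)).filter (fun k => ¬ p ∣ k) with hT
  set P := ∏ k ∈ T.filter (fun k => ¬ q ∣ k), (k : ZMod p) with hP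
  -- product over all of T
  have hprodT : ∏ k ∈ T, (k : ZMod p) = (-1) ^ b * ((Nat.factorial a : ℕ) : ZMod p) := by
    rw [hT, Finset.prod_filter]
    have hsplit : (1 : ℕ) ≤ b * p + 1 := by omega
    have hsplit2 : b * p + 1 ≤ b * p + a + 1 := by omega
    rw [← Finset.prod_Ico_consecutive _ hsplit hsplit2, stmt16_aux2 p b]
    have h7 : b * p + a + 1 = b * p + (a + 1) := by omega
    rw [h7, stmt16_aux1 p b a (by omega)]
  -- product over multiples of q in T
  have hprodQ : ∏ k ∈ T.filter (fun k => q ∣ k), (k : ZMod p)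
      = (q : ZMod p) ^ a * ((Nat.factorial a : ℕ) : ZMod p) := by
    have himg : T.filter (fun k => q ∣ k)
        = (Finset.Ico 1 (a + 1)).image (fun m => q * m) := by
      ext k
      simp only [hT, Finset.mem_filter, Finset.mem_Ico, Finset.mem_image, Finset.filter_filter]
      constructor
      · rintro ⟨⟨h1, h2⟩, hpk, m, rfl⟩
        refine ⟨m, ⟨by nlinarith, by nlinarith⟩, rfl⟩
      · rintro ⟨m, ⟨hm1, hm2⟩, rfl⟩
        have hm2' : m ≤ a := by omega
        refine ⟨⟨by nlinarith, by nlinarith⟩, ?_, ⟨m, rfl⟩⟩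
        intro hdvd
        rcases (hp.dvd_mul).mp hdvd with h | h
        · exact hpq ((Nat.prime_dvd_prime_iff_eq hp hq).mp h)
        · have := Nat.le_of_dvd (by omega) h
          omega
    rw [himg, Finset.prod_image (fun x _ y _ h => Nat.eq_of_mul_eq_mul_left hq.pos h)]
    have hcast : ∀ m ∈ Finset.Ico 1 (a + 1),
        ((q * m : ℕ) : ZMod p) = (q : ZMod p) * (m : ZMod p) := by
      intro m _; push_cast; ring
    rw [Finset.prod_congr rfl hcast, Finset.prod_mul_distrib, Finset.prod_const, Nat.card_Ico,
      ← Nat.cast_prod, Finset.prod_Ico_id_eq_factorial]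
    norm_num
  -- combine
  have hsplitT := Finset.prod_filter_mul_prod_filter_not T (fun k => q ∣ k)
    (fun k => (k : ZMod p))
  rw [hprodQ, ← hP, hprodT] at hsplitT
  have hfact : ((Nat.factorial a : ℕ) : ZMod p) ≠ 0 := by
    rw [Ne, ZMod.natCast_eq_zero_iff]
    intro h
    have := (Nat.Prime.dvd_factorial hp).mp h
    omega
  have hq0 : ((q : ℤ) : ZMod p) ≠ 0 := by
    rw [Int.cast_natCast, Ne, ZMod.natCast_eq_zero_iff]
    exact fun h => hpq ((Nat.prime_dvd_prime_iff_eq hp hq).mp h)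
  set L := ((legendreSym p q : ℤ) : ZMod p) with hLdef
  have hL : L = (q : ZMod p) ^ a := by
    rw [hLdef, legendreSym.eq_pow]
    push_cast
    rfl
  have hLsq : L * L = 1 := by
    rcases legendreSym.eq_one_or_neg_one p hq0 with h | h <;>
      rw [hLdef, h] <;> norm_num
  have hcancel : (q : ZMod p) ^ a * P = (-1) ^ b :=
    mul_right_cancel₀ hfact (by linear_combination hsplitT)
  have hbq : (q - 1) / 2 = b := by omega
  rw [hbq]
  calc P = 1 * P := (one_mul P).symm
    _ = (L * L) * P := by rw [hLsq]
    _ = L * ((q : ZMod p) ^ a * P) := by rw [hL]; ring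
    _ = L * (-1) ^ b := by rw [hcancel]
    _ = (-1) ^ b * L := mul_comm _ _
end

section
/- Let p and q be distinct odd primes. The product of all elements of L = {(k mod p, k mod q) : 0 < k < pq/2, p ∤ k, q ∤ k} in (ℤ/pℤ)ˣ × (ℤ/qℤ)ˣ equals ((−1)^((q−1)/2) · (q/p), (−1)^((p−1)/2) · (p/q)), where (·/·) denotes the Legendre symbol. -/
-- product over a block of p consecutive values, skipping multiples of p
private lemma blocks (p : ℕ) [Fact p.Prime] (m : ℕ) :
    ∏ k ∈ Finset.range (p * m), (if p ∣ k then 1 else (k : ZMod p)) = (-1) ^ m := by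
  induction m with
  | zero => simp
  | succ m ih =>
    have hp := (Fact.out : p.Prime).two_le
    rw [Nat.mul_succ, Finset.prod_range_add, ih]
    have h2 : ∏ x ∈ Finset.range p, (if p ∣ (p * m + x) then 1 else ((p * m + x : ℕ) : ZMod p))
        = ∏ x ∈ Finset.range p, (if p ∣ x then 1 else (x : ZMod p)) := by
      apply Finset.prod_congr rfl
      intro x hx
      have hdvd : p ∣ (p * m + x) ↔ p ∣ x := by
        constructor
        · intro h; exact (Nat.dvd_add_right ⟨m, rfl⟩).mp h
        · intro h; exact Dvd.dvd.add ⟨m, rfl⟩ h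
      have hcast : ((p * m + x : ℕ) : ZMod p) = (x : ZMod p) := by
        push_cast [ZMod.natCast_self]; ring
      rw [hcast]
      by_cases h : p ∣ x
      · rw [if_pos (hdvd.mpr h), if_pos h]
      · rw [if_neg (fun hh => h (hdvd.mp hh)), if_neg h]
    rw [h2]
    have h3 : ∏ x ∈ Finset.range p, (if p ∣ x then 1 else (x : ZMod p))
        = ∏ x ∈ Finset.Ico 1 p, (x : ZMod p) := by
      have : Finset.range p = insert 0 (Finset.Ico 1 p) := by
        ext x; simp [Finset.mem_range, Finset.mem_Ico]; omega
      rw [this, Finset.prod_insert (by simp)]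
      rw [if_pos (dvd_zero p), one_mul]
      apply Finset.prod_congr rfl
      intro x hx
      rw [if_neg]
      intro h
      have := Nat.le_of_dvd (by simp at hx; omega) h
      simp at hx; omega
    rw [h3, ZMod.prod_Ico_one_prime, pow_succ]


private lemma lemA (p q : ℕ) [Fact p.Prime] [Fact q.Prime] (hpq : p ≠ q)
    (hp2 : p ≠ 2) (hq2 : q ≠ 2)
    (blocks : ∀ m : ℕ, ∏ k ∈ Finset.range (p * m),
      (if p ∣ k then 1 else (k : ZMod p)) = (-1) ^ m) :
    ∏ k ∈ (Finset.range (p * q)).filter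
        (fun k => 0 < k ∧ 2 * k < p * q ∧ ¬ p ∣ k ∧ ¬ q ∣ k), (k : ZMod p)
      = (-1) ^ ((q - 1) / 2) * ((legendreSym p q : ℤ) : ZMod p) := by
  have hp : p.Prime := Fact.out
  have hq : q.Prime := Fact.out
  have hp1 : p % 2 = 1 := Nat.odd_iff.mp (hp.odd_of_ne_two hp2)
  have hq1 : q % 2 = 1 := Nat.odd_iff.mp (hq.odd_of_ne_two hq2)
  have hp2le : 2 ≤ p := hp.two_le
  have hq2le : 2 ≤ q := hq.two_le
  set m := (q - 1) / 2 with hm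
  set N := p * m + (p + 1) / 2 with hN
  -- basic arithmetic
  have hNq : 2 * N = p * q + 1 := by
    have : q = 2 * m + 1 := by omega
    rw [hN, this]; ring_nf; omega
  set S1 := (Finset.range N).filter (fun k => ¬ p ∣ k) with hS1
  -- Step 1: rewrite the filter set
  have hset : (Finset.range (p * q)).filter
      (fun k => 0 < k ∧ 2 * k < p * q ∧ ¬ p ∣ k ∧ ¬ q ∣ k)
      = S1.filter (fun k => ¬ q ∣ k) := by
    ext k
    simp only [hS1, Finset.mem_filter, Finset.mem_range]
    constructor
    · rintro ⟨hk1, hk2, hk3, hk4, hk5⟩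
      exact ⟨⟨by omega, hk4⟩, hk5⟩
    · rintro ⟨⟨hk1, hk2⟩, hk3⟩
      have hk0 : k ≠ 0 := by rintro rfl; exact hk2 (dvd_zero p)
      refine ⟨by omega, by omega, by omega, hk2, hk3⟩
  -- Step 2: full product over S1
  have hS1prod : ∏ k ∈ S1, (k : ZMod p)
      = (-1) ^ m * ((((p - 1) / 2).factorial : ℕ) : ZMod p) := by
    rw [hS1, Finset.prod_filter]
    have hsplit : ∏ k ∈ Finset.range N, (if ¬ p ∣ k then (k : ZMod p) else 1)
        = (∏ k ∈ Finset.range (p * m), (if p ∣ k then 1 else (k : ZMod p)))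
          * ∏ x ∈ Finset.range ((p + 1) / 2),
              (if p ∣ (p * m + x) then 1 else ((p * m + x : ℕ) : ZMod p)) := by
      rw [hN, ← Finset.prod_range_add]
      apply Finset.prod_congr rfl
      intro k _
      by_cases h : p ∣ k <;> simp [h]
    rw [hsplit, blocks m]
    congr 1
    have htail : ∏ x ∈ Finset.range ((p + 1) / 2),
        (if p ∣ (p * m + x) then 1 else ((p * m + x : ℕ) : ZMod p))
        = ∏ x ∈ Finset.range ((p + 1) / 2), (if x = 0 then 1 else (x : ZMod p)) := by
      apply Finset.prod_congr rfl
      intro x hx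
      simp only [Finset.mem_range] at hx
      have hxp : x < p := by omega
      have hdvd : p ∣ (p * m + x) ↔ x = 0 := by
        constructor
        · intro h
          have : p ∣ x := (Nat.dvd_add_right ⟨m, rfl⟩).mp h
          rcases Nat.eq_zero_of_dvd_of_lt this hxp |>.symm with h'
          omega
        · rintro rfl; simp
      have hcast : ((p * m + x : ℕ) : ZMod p) = (x : ZMod p) := by
        push_cast [ZMod.natCast_self]; ring
      rw [hcast]
      by_cases h : x = 0
      · rw [if_pos (hdvd.mpr h), if_pos h]
      · rw [if_neg (fun hh => h (hdvd.mp hh)), if_neg h]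
    rw [htail]
    have hins : Finset.range ((p + 1) / 2) = insert 0 (Finset.Ico 1 ((p + 1) / 2)) := by
      ext x; simp [Finset.mem_range, Finset.mem_Ico]; omega
    rw [hins, Finset.prod_insert (by simp), if_pos rfl, one_mul]
    rw [Finset.prod_congr rfl (fun x hx => by
      rw [if_neg]; simp only [Finset.mem_Ico] at hx; omega)]
    have : (p + 1) / 2 = (p - 1) / 2 + 1 := by omega
    rw [this, ← Nat.cast_prod, Finset.prod_Ico_id_eq_factorial]
  -- Step 3: product over multiples of q in S1
  have hT : S1.filter (fun k => q ∣ k)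
      = (Finset.Ico 1 ((p + 1) / 2)).image (fun j => q * j) := by
    ext k
    simp only [hS1, Finset.mem_filter, Finset.mem_range, Finset.mem_image, Finset.mem_Ico]
    constructor
    · rintro ⟨⟨hk1, hk2⟩, j, rfl⟩
      refine ⟨j, ⟨?_, ?_⟩, rfl⟩
      · rcases Nat.eq_zero_or_pos j with rfl | h
        · exact absurd (dvd_zero p) (by simpa using hk2)
        · omega
      · -- q * j < N means 2*q*j < p*q+1, so 2*j < p+... 
        have h1 : 2 * (q * j) < 2 * N := by omega
        rw [hNq] at h1
        have h2 : 2 * j < p + 1 := by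
          by_contra h
          push_neg at h
          have : q * (p + 1) ≤ q * (2 * j) := Nat.mul_le_mul_left q h
          nlinarith
        omega
    · rintro ⟨j, ⟨hj1, hj2⟩, rfl⟩
      have hjp : 2 * j < p + 1 := by omega
      refine ⟨⟨?_, ?_⟩, ⟨j, rfl⟩⟩
      · have h3 : q * (2 * j) ≤ q * p := Nat.mul_le_mul_left q (by omega)
        have h4 : 2 * (q * j) = q * (2 * j) := by ring
        have h5 : q * p = p * q := Nat.mul_comm q p
        omega
      · intro h
        have hcop : ¬ p ∣ q := by
          intro hd
          exact hpq ((Nat.prime_dvd_prime_iff_eq hp hq).mp hd)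
        have : p ∣ j := Nat.Coprime.dvd_of_dvd_mul_left
          ((Nat.coprime_primes hp hq).mpr hpq) h
        have := Nat.le_of_dvd (by omega) this
        omega
  have hTprod : ∏ k ∈ S1.filter (fun k => q ∣ k), (k : ZMod p)
      = (q : ZMod p) ^ ((p - 1) / 2) * ((((p - 1) / 2).factorial : ℕ) : ZMod p) := by
    rw [hT, Finset.prod_image (by
      intro a _ b _ h
      exact Nat.eq_of_mul_eq_mul_left (by omega) h)]
    have : ∀ j ∈ Finset.Ico 1 ((p + 1) / 2), ((q * j : ℕ) : ZMod p)
        = (q : ZMod p) * (j : ZMod p) := by intro j _; push_cast; ring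
    rw [Finset.prod_congr rfl this, Finset.prod_mul_distrib, Finset.prod_const]
    have hcard : (Finset.Ico 1 ((p + 1) / 2)).card = (p - 1) / 2 := by
      rw [Nat.card_Ico]; omega
    rw [hcard]
    congr 1
    have : (p + 1) / 2 = (p - 1) / 2 + 1 := by omega
    rw [this, ← Nat.cast_prod, Finset.prod_Ico_id_eq_factorial]
  -- Step 4: combine
  rw [hset]
  have hkey := Finset.prod_filter_mul_prod_filter_not S1 (fun k => q ∣ k)
    (fun k => (k : ZMod p))
  rw [hTprod, hS1prod] at hkey
  have hFne : ((((p - 1) / 2).factorial : ℕ) : ZMod p) ≠ 0 := by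
    rw [Ne, ZMod.natCast_eq_zero_iff]
    rw [hp.dvd_factorial]
    omega
  have hL : ((legendreSym p q : ℤ) : ZMod p) = (q : ZMod p) ^ ((p - 1) / 2) := by
    rw [legendreSym.eq_pow]
    have : p / 2 = (p - 1) / 2 := by omega
    rw [this]; push_cast; ring_nf
  have hLsq : ((legendreSym p q : ℤ) : ZMod p) * ((legendreSym p q : ℤ) : ZMod p) = 1 := by
    have hqne : ((q : ℤ) : ZMod p) ≠ 0 := by
      rw [Int.cast_natCast, Ne, ZMod.natCast_eq_zero_iff]
      intro hd
      exact hpq ((Nat.prime_dvd_prime_iff_eq hp hq).mp hd)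
    have := legendreSym.sq_one p hqne
    calc ((legendreSym p q : ℤ) : ZMod p) * ((legendreSym p q : ℤ) : ZMod p)
        = (((legendreSym p q ^ 2 : ℤ)) : ZMod p) := by push_cast; ring
      _ = 1 := by rw_mod_cast [this]; simp
  set X := ∏ k ∈ S1.filter (fun k => ¬ q ∣ k), (k : ZMod p) with hX
  set L := ((legendreSym p q : ℤ) : ZMod p) with hLdef
  set F := ((((p - 1) / 2).factorial : ℕ) : ZMod p) with hFdef
  -- hkey : L * F * X = (-1)^m * F
  have h2 : F * X = F * ((-1 : ZMod p) ^ m * L) := by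
    linear_combination L * hkey + F * X * L * hL - F * X * hLsq
  exact mul_left_cancel₀ hFne h2

/-- the product of all elements of `L` in `ℤ/p × ℤ/q` equals
`((-1)^((q-1)/2)·(q/p), (-1)^((p-1)/2)·(p/q))`. -/
theorem stmt_17 (p q : ℕ) [Fact p.Prime] [Fact q.Prime] (hpq : p ≠ q)
    (hp2 : p ≠ 2) (hq2 : q ≠ 2) :
    ∏ k ∈ (Finset.range (p * q)).filter
        (fun k => 0 < k ∧ 2 * k < p * q ∧ ¬ p ∣ k ∧ ¬ q ∣ k),
        (((k : ZMod p), (k : ZMod q)) : ZMod p × ZMod q) =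
      ((-1) ^ ((q - 1) / 2) * ((legendreSym p q : ℤ) : ZMod p),
       (-1) ^ ((p - 1) / 2) * ((legendreSym q p : ℤ) : ZMod q)) := by
  have hswap : (Finset.range (p * q)).filter
        (fun k => 0 < k ∧ 2 * k < p * q ∧ ¬ p ∣ k ∧ ¬ q ∣ k)
      = (Finset.range (q * p)).filter
        (fun k => 0 < k ∧ 2 * k < q * p ∧ ¬ q ∣ k ∧ ¬ p ∣ k) := by
    ext k
    simp only [Finset.mem_filter, Finset.mem_range, Nat.mul_comm p q]
    tauto
  apply Prod.ext
  · rw [Prod.fst_prod]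
    exact lemA p q hpq hp2 hq2 (blocks p)
  · rw [Prod.snd_prod]
    simp only [hswap]
    exact lemA q p hpq.symm hq2 hp2 (blocks q)
end
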